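/- arXiv:2111.13446 — 6 statements merged into one kernel-verified Lean document; each statement's English description precedes it below -/
import Mathlib

section
/- Let n ≥ 2 and let ℓ ≥ 2 be an integer. Then for every vector η ∈ ℝⁿ with ‖η‖ ≤ ℓ there exist unit vectors ω₁, …, ω_ℓ ∈ ℝⁿ such that ω₁ + ω₂ + ⋯ + ω_ℓ = η. -/
lemma exists_unit_orthogonal (n : ℕ) (hn : 2 ≤ n) (η : EuclideanSpace ℝ (Fin n)) :
    ∃ v : EuclideanSpace ℝ (Fin n), ‖v‖ = 1 ∧ (inner ℝ v η : ℝ) = 0 := by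
  set K := (ℝ ∙ η)ᗮ
  have hdim : 1 ≤ Module.finrank ℝ K := by
    have h1 : Module.finrank ℝ (ℝ ∙ η) + Module.finrank ℝ K = n := by
      rw [Submodule.finrank_add_finrank_orthogonal]
      simp
    have h2 : Module.finrank ℝ (ℝ ∙ η) ≤ 1 := by
      have := finrank_span_le_card (R := ℝ) ({η} : Set (EuclideanSpace ℝ (Fin n)))
      simpa using this
    omega
  obtain ⟨v, hvK, hv0⟩ : ∃ v ∈ K, v ≠ 0 := by
    by_contra h
    push_neg at h
    have : K = ⊥ := by
      ext x; simp only [Submodule.mem_bot]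
      exact ⟨fun hx => by by_contra hne; exact hne (h x hx), fun hx => hx ▸ K.zero_mem⟩
    rw [this] at hdim; simp at hdim
  refine ⟨‖v‖⁻¹ • v, ?_, ?_⟩
  · rw [norm_smul, norm_inv, norm_norm, inv_mul_cancel₀ (norm_ne_zero_iff.mpr hv0)]
  · have : (inner ℝ v η : ℝ) = 0 :=
      Submodule.mem_orthogonal_singleton_iff_inner_left.mp hvK
    rw [inner_smul_left]
    simp [this]

lemma two_sum (n : ℕ) (hn : 2 ≤ n) (η : EuclideanSpace ℝ (Fin n)) (hη : ‖η‖ ≤ 2) :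
    ∃ a b : EuclideanSpace ℝ (Fin n), ‖a‖ = 1 ∧ ‖b‖ = 1 ∧ a + b = η := by
  obtain ⟨v, hv1, hv0⟩ := exists_unit_orthogonal n hn η
  set t : ℝ := Real.sqrt (1 - ‖η‖ ^ 2 / 4) with ht
  have hnn : 0 ≤ 1 - ‖η‖ ^ 2 / 4 := by nlinarith [norm_nonneg η]
  have ht2 : t ^ 2 = 1 - ‖η‖ ^ 2 / 4 := Real.sq_sqrt hnn
  have e1 : (inner ℝ ((1/2 : ℝ) • η) (t • v) : ℝ) = 0 := by
    rw [real_inner_smul_left, real_inner_smul_right]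
    have h0 : (inner ℝ η v : ℝ) = 0 := by rw [real_inner_comm]; exact hv0
    rw [h0]; ring
  have h1 : ‖(1/2 : ℝ) • η‖ ^ 2 = ‖η‖ ^ 2 / 4 := by
    rw [norm_smul, mul_pow, Real.norm_eq_abs, sq_abs]; ring
  have h2 : ‖t • v‖ ^ 2 = t ^ 2 := by
    rw [norm_smul, hv1, mul_one, Real.norm_eq_abs, sq_abs]
  refine ⟨(1/2 : ℝ) • η + t • v, (1/2 : ℝ) • η - t • v, ?_, ?_, by module⟩
  · have h : ‖(1/2 : ℝ) • η + t • v‖ ^ 2 = 1 := by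
      rw [norm_add_sq_real, e1, h1, h2]; linarith
    calc ‖(1/2 : ℝ) • η + t • v‖ = Real.sqrt (‖(1/2 : ℝ) • η + t • v‖ ^ 2) :=
        (Real.sqrt_sq (norm_nonneg _)).symm
      _ = 1 := by rw [h]; exact Real.sqrt_one
  · have h : ‖(1/2 : ℝ) • η - t • v‖ ^ 2 = 1 := by
      rw [norm_sub_sq_real, e1, h1, h2]; linarith
    calc ‖(1/2 : ℝ) • η - t • v‖ = Real.sqrt (‖(1/2 : ℝ) • η - t • v‖ ^ 2) :=
        (Real.sqrt_sq (norm_nonneg _)).symm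
      _ = 1 := by rw [h]; exact Real.sqrt_one

/-- Let n ≥ 2 and let ℓ ≥ 2 be an integer. Then for every vector η ∈ ℝⁿ with
‖η‖ ≤ ℓ there exist unit vectors ω₁, …, ω_ℓ ∈ ℝⁿ such that ω₁ + ω₂ + ⋯ + ω_ℓ = η. -/
theorem unit_vector_decomposition (n ℓ : ℕ) (hn : 2 ≤ n) (hℓ : 2 ≤ ℓ)
    (η : EuclideanSpace ℝ (Fin n)) (hη : ‖η‖ ≤ (ℓ : ℝ)) :
    ∃ ω : Fin ℓ → EuclideanSpace ℝ (Fin n),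
      (∀ j, ‖ω j‖ = 1) ∧ ∑ j, ω j = η := by
  induction ℓ, hℓ using Nat.le_induction generalizing η with
  | base =>
    obtain ⟨a, b, ha, hb, hab⟩ := two_sum n hn η (by exact_mod_cast hη)
    refine ⟨![a, b], ?_, ?_⟩
    · intro j; fin_cases j <;> simpa
    · rw [Fin.sum_univ_two]; simpa
  | succ ℓ hℓ2 ih =>
    obtain ⟨ω₀, hω₀, hrest⟩ : ∃ ω₀ : EuclideanSpace ℝ (Fin n),
        ‖ω₀‖ = 1 ∧ ‖η - ω₀‖ ≤ (ℓ : ℝ) := by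
      have hℓ2' : (2 : ℝ) ≤ ℓ := by exact_mod_cast hℓ2
      by_cases h0 : η = 0
      · obtain ⟨v, hv1, -⟩ := exists_unit_orthogonal n hn η
        exact ⟨v, hv1, by rw [h0, zero_sub, norm_neg, hv1]; linarith⟩
      · have hpos : 0 < ‖η‖ := norm_pos_iff.mpr h0
        refine ⟨‖η‖⁻¹ • η, ?_, ?_⟩
        · rw [norm_smul, norm_inv, norm_norm, inv_mul_cancel₀ hpos.ne']
        · have key : η - ‖η‖⁻¹ • η = (1 - ‖η‖⁻¹) • η := by
            rw [sub_smul, one_smul]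
          rw [key, norm_smul]
          have : ‖(1 - ‖η‖⁻¹ : ℝ)‖ * ‖η‖ = |(1 - ‖η‖⁻¹) * ‖η‖| := by
            rw [abs_mul, Real.norm_eq_abs, abs_of_pos hpos]
          rw [this]
          have heq : (1 - ‖η‖⁻¹) * ‖η‖ = ‖η‖ - 1 := by field_simp
          rw [heq, abs_le]
          have : ‖η‖ ≤ (ℓ : ℝ) + 1 := by push_cast at hη; linarith
          constructor <;> linarith
    obtain ⟨ω, hω1, hωs⟩ := ih (η - ω₀) hrest
    refine ⟨Fin.cons ω₀ ω, ?_, ?_⟩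
    · intro j
      refine Fin.cases ?_ ?_ j
      · simpa
      · intro i; simpa using hω1 i
    · rw [Fin.sum_cons, hωs]; abel
end

section
/- Let n ≥ 2, let m ≥ 2 be an even integer, let k > 0, and let ξ ∈ ℝⁿ with 0 < ‖ξ‖ ≤ (m+1)k. Set e₁ = ξ/‖ξ‖ and let e₂ ∈ ℝⁿ be a unit vector with ⟨e₁, e₂⟩ = 0. Define ζ₁ = (1/m)(−k + ‖ξ‖)·e₁ + (1/m)·√((m²−1)k² + 2k‖ξ‖ − ‖ξ‖²)·e₂, ζ₂ = (1/m)(−k + ‖ξ‖)·e₁ − (1/m)·√((m²−1)k² + 2k‖ξ‖ − ‖ξ‖²)·e₂, and ζ₃ = k·e₁. Then (m²−1)k² + 2k‖ξ‖ − ‖ξ‖² ≥ 0, ‖ζ₁‖ = ‖ζ₂‖ = ‖ζ₃‖ = k, and (m/2)·ζ₁ + (m/2)·ζ₂ + ζ₃ = ξ. -/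
open scoped RealInnerProductSpace

/-- the explicit wave vectors for even m (equation (2.6), Case 1 of Thm 2.2):
for 0 < ‖ξ‖ ≤ (m+1)k the vectors ζ₁, ζ₂, ζ₃ all have length k and
(m/2)·ζ₁ + (m/2)·ζ₂ + ζ₃ = ξ; moreover the discriminant is nonnegative. -/
theorem waveVectors_even_case (n m : ℕ) (hn : 2 ≤ n) (hm : 2 ≤ m) (hme : Even m)
    (k : ℝ) (hk : 0 < k) (ξ : EuclideanSpace ℝ (Fin n))
    (hξ0 : 0 < ‖ξ‖) (hξ : ‖ξ‖ ≤ ((m : ℝ) + 1) * k)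
    (e₁ e₂ : EuclideanSpace ℝ (Fin n)) (he₁ : e₁ = ‖ξ‖⁻¹ • ξ)
    (he₂ : ‖e₂‖ = 1) (horth : ⟪e₁, e₂⟫ = 0)
    (ζ₁ ζ₂ ζ₃ : EuclideanSpace ℝ (Fin n))
    (hζ₁ : ζ₁ = ((1 : ℝ) / m * (-k + ‖ξ‖)) • e₁ +
      ((1 : ℝ) / m * Real.sqrt (((m : ℝ) ^ 2 - 1) * k ^ 2 + 2 * k * ‖ξ‖ - ‖ξ‖ ^ 2)) • e₂)
    (hζ₂ : ζ₂ = ((1 : ℝ) / m * (-k + ‖ξ‖)) • e₁ -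
      ((1 : ℝ) / m * Real.sqrt (((m : ℝ) ^ 2 - 1) * k ^ 2 + 2 * k * ‖ξ‖ - ‖ξ‖ ^ 2)) • e₂)
    (hζ₃ : ζ₃ = k • e₁) :
    0 ≤ ((m : ℝ) ^ 2 - 1) * k ^ 2 + 2 * k * ‖ξ‖ - ‖ξ‖ ^ 2 ∧
      ‖ζ₁‖ = k ∧ ‖ζ₂‖ = k ∧ ‖ζ₃‖ = k ∧
      ((m : ℝ) / 2) • ζ₁ + ((m : ℝ) / 2) • ζ₂ + ζ₃ = ξ := by
  have hm2 : (2:ℝ) ≤ (m:ℝ) := by exact_mod_cast hm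
  have hm0 : (m:ℝ) ≠ 0 := by linarith
  have hξn : ‖ξ‖ ≠ 0 := ne_of_gt hξ0
  have hD : 0 ≤ ((m : ℝ) ^ 2 - 1) * k ^ 2 + 2 * k * ‖ξ‖ - ‖ξ‖ ^ 2 := by
    nlinarith [mul_nonneg (sub_nonneg.mpr hξ) (by nlinarith : (0:ℝ) ≤ ‖ξ‖ + ((m:ℝ) - 1) * k)]
  have he1 : ‖e₁‖ = 1 := by
    rw [he₁, norm_smul, norm_inv, norm_norm]
    field_simp
  set D := ((m : ℝ) ^ 2 - 1) * k ^ 2 + 2 * k * ‖ξ‖ - ‖ξ‖ ^ 2 with hDdef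
  have hs2 : Real.sqrt D ^ 2 = D := Real.sq_sqrt hD
  have key : ∀ x, x = ((1:ℝ)/m * (-k + ‖ξ‖)) • e₁ + ((1:ℝ)/m * Real.sqrt D) • e₂ ∨
      x = ((1:ℝ)/m * (-k + ‖ξ‖)) • e₁ - ((1:ℝ)/m * Real.sqrt D) • e₂ → ‖x‖ = k := by
    intro x hx
    have hsq : ‖x‖ ^ 2 = k ^ 2 := by
      rcases hx with hx | hx
      · rw [hx, @norm_add_sq_real]
        simp only [norm_smul, real_inner_smul_left, real_inner_smul_right, horth, he1, he₂,
          mul_zero, mul_one]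
        rw [Real.norm_eq_abs, Real.norm_eq_abs, sq_abs, sq_abs, mul_pow, mul_pow, hs2, hDdef]
        field_simp
        ring
      · rw [hx, @norm_sub_sq_real]
        simp only [norm_smul, real_inner_smul_left, real_inner_smul_right, horth, he1, he₂,
          mul_zero, mul_one]
        rw [Real.norm_eq_abs, Real.norm_eq_abs, sq_abs, sq_abs, mul_pow, mul_pow, hs2, hDdef]
        field_simp
        ring
    calc ‖x‖ = Real.sqrt (‖x‖ ^ 2) := (Real.sqrt_sq (norm_nonneg _)).symm
      _ = Real.sqrt (k ^ 2) := by rw [hsq]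
      _ = k := Real.sqrt_sq hk.le
  refine ⟨hD, key ζ₁ (Or.inl hζ₁), key ζ₂ (Or.inr hζ₂), ?_, ?_⟩
  · rw [hζ₃, norm_smul, he1, mul_one, Real.norm_eq_abs, abs_of_pos hk]
  · rw [hζ₁, hζ₂, hζ₃, he₁]
    match_scalars
    · field_simp
      ring
    · ring
end

section
/- Let n ≥ 2, let k > 0, and let ξ ∈ ℝⁿ with 0 < ‖ξ‖ ≤ 3k. Set e₁ = ξ/‖ξ‖ and let e₂ ∈ ℝⁿ be a unit vector with ⟨e₁, e₂⟩ = 0. Define ζ₁ = (1/2)(−k + ‖ξ‖)·e₁ − (1/2)·√(3k² + 2k‖ξ‖ − ‖ξ‖²)·e₂, ζ₂ = (1/2)(−k + ‖ξ‖)·e₁ + (1/2)·√(3k² + 2k‖ξ‖ − ‖ξ‖²)·e₂, and ζ₃ = k·e₁. Then 3k² + 2k‖ξ‖ − ‖ξ‖² ≥ 0, ‖ζ₁‖ = ‖ζ₂‖ = ‖ζ₃‖ = k, and ζ₁ + ζ₂ + ζ₃ = ξ. -/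
open scoped RealInnerProductSpace

set_option maxHeartbeats 1000000 in
/-- the explicit triple of wave vectors from the proof of Theorem 3.1 (m = 2):
for 0 < ‖ξ‖ ≤ 3k the vectors ζ₁, ζ₂, ζ₃ all have length k and ζ₁ + ζ₂ + ζ₃ = ξ;
moreover the discriminant 3k² + 2k‖ξ‖ − ‖ξ‖² is nonnegative. -/
theorem waveVectors_quadratic_case (n : ℕ) (hn : 2 ≤ n)
    (k : ℝ) (hk : 0 < k) (ξ : EuclideanSpace ℝ (Fin n))
    (hξ0 : 0 < ‖ξ‖) (hξ : ‖ξ‖ ≤ 3 * k)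
    (e₁ e₂ : EuclideanSpace ℝ (Fin n)) (he₁ : e₁ = ‖ξ‖⁻¹ • ξ)
    (he₂ : ‖e₂‖ = 1) (horth : ⟪e₁, e₂⟫ = 0)
    (ζ₁ ζ₂ ζ₃ : EuclideanSpace ℝ (Fin n))
    (hζ₁ : ζ₁ = ((1 : ℝ) / 2 * (-k + ‖ξ‖)) • e₁ -
      ((1 : ℝ) / 2 * Real.sqrt (3 * k ^ 2 + 2 * k * ‖ξ‖ - ‖ξ‖ ^ 2)) • e₂)
    (hζ₂ : ζ₂ = ((1 : ℝ) / 2 * (-k + ‖ξ‖)) • e₁ +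
      ((1 : ℝ) / 2 * Real.sqrt (3 * k ^ 2 + 2 * k * ‖ξ‖ - ‖ξ‖ ^ 2)) • e₂)
    (hζ₃ : ζ₃ = k • e₁) :
    0 ≤ 3 * k ^ 2 + 2 * k * ‖ξ‖ - ‖ξ‖ ^ 2 ∧
      ‖ζ₁‖ = k ∧ ‖ζ₂‖ = k ∧ ‖ζ₃‖ = k ∧ ζ₁ + ζ₂ + ζ₃ = ξ := by
  have hdisc : 0 ≤ 3 * k ^ 2 + 2 * k * ‖ξ‖ - ‖ξ‖ ^ 2 := by nlinarith
  have he₁n : ‖e₁‖ = 1 := by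
    rw [he₁, norm_smul, norm_inv, norm_norm, inv_mul_cancel₀ hξ0.ne']
  have hsq : Real.sqrt (3 * k ^ 2 + 2 * k * ‖ξ‖ - ‖ξ‖ ^ 2) ^ 2
      = 3 * k ^ 2 + 2 * k * ‖ξ‖ - ‖ξ‖ ^ 2 := Real.sq_sqrt hdisc
  set a : ℝ := (1 : ℝ) / 2 * (-k + ‖ξ‖)
  set b : ℝ := (1 : ℝ) / 2 * Real.sqrt (3 * k ^ 2 + 2 * k * ‖ξ‖ - ‖ξ‖ ^ 2)
  have hin : ⟪a • e₁, b • e₂⟫ = 0 := by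
    rw [real_inner_smul_left, real_inner_smul_right, horth]; ring
  have hab : a ^ 2 + b ^ 2 = k ^ 2 := by
    simp only [a, b]; nlinarith [hsq]
  have hnorm : ∀ v : EuclideanSpace ℝ (Fin n), ‖v‖ ^ 2 = k ^ 2 → ‖v‖ = k := by
    intro v h
    nlinarith [norm_nonneg v, hk.le]
  have h1 : ‖ζ₁‖ = k := by
    apply hnorm
    rw [hζ₁, norm_sub_sq_real, hin, norm_smul, norm_smul, he₁n, he₂]
    simp only [mul_one, Real.norm_eq_abs, sq_abs]
    linarith [hab]
  have h2 : ‖ζ₂‖ = k := by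
    apply hnorm
    rw [hζ₂, norm_add_sq_real, hin, norm_smul, norm_smul, he₁n, he₂]
    simp only [mul_one, Real.norm_eq_abs, sq_abs]
    linarith [hab]
  have h3 : ‖ζ₃‖ = k := by
    rw [hζ₃, norm_smul, he₁n, mul_one, Real.norm_eq_abs, abs_of_pos hk]
  refine ⟨hdisc, h1, h2, h3, ?_⟩
  rw [hζ₁, hζ₂, hζ₃, he₁]
  rw [smul_smul, smul_smul]
  match_scalars <;> field_simp <;> ring
end

section
/- Let n ≥ 2, let m ≥ 2 be an integer, let k > 0, and let ξ ∈ ℝⁿ with (m−1)k ≤ ‖ξ‖ ≤ (m+1)k and ‖ξ‖ > 0. Set e₁ = ξ/‖ξ‖, let e₂ ∈ ℝⁿ be a unit vector with ⟨e₁, e₂⟩ = 0, and set Σ = √(−(m²−1)²k⁴ + 2(m²+1)k²‖ξ‖² − ‖ξ‖⁴). Define μ₁ = (((m²−1)k² + ‖ξ‖²)/(2m‖ξ‖))·e₁ − (Σ/(2m‖ξ‖))·e₂ and μ₂ = ((−(m²−1)k² + ‖ξ‖²)/(2‖ξ‖))·e₁ + (Σ/(2‖ξ‖))·e₂. Then −(m²−1)²k⁴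 + 2(m²+1)k²‖ξ‖² − ‖ξ‖⁴ ≥ 0, ‖μ₁‖ = k, ‖μ₂‖ = k, and m·μ₁ + μ₂ = ξ. -/
open scoped RealInnerProductSpace

set_option maxHeartbeats 1000000 in
lemma combo_norm_sq {n : ℕ} (e₁ e₂ : EuclideanSpace ℝ (Fin n))
    (h1 : ‖e₁‖ = 1) (h2 : ‖e₂‖ = 1) (horth : ⟪e₁, e₂⟫ = 0) (a b : ℝ) :
    ‖a • e₁ + b • e₂‖ ^ 2 = a ^ 2 + b ^ 2 := by
  rw [norm_add_sq_real, norm_smul, norm_smul, real_inner_smul_left,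
    real_inner_smul_right, horth, h1, h2]
  simp [Real.norm_eq_abs, mul_pow, sq_abs]

set_option maxHeartbeats 1000000 in
/-- the wave vectors of equation (2.10) in the proof of Theorem 2.3:
for (m−1)k ≤ ‖ξ‖ ≤ (m+1)k the real vectors μ₁, μ₂ have length k and m·μ₁ + μ₂ = ξ;
moreover the discriminant is nonnegative. -/
theorem waveVectors_general_m (n m : ℕ) (hn : 2 ≤ n) (hm : 2 ≤ m)
    (k : ℝ) (hk : 0 < k) (ξ : EuclideanSpace ℝ (Fin n)) (hξ0 : 0 < ‖ξ‖)
    (hξl : ((m : ℝ) - 1) * k ≤ ‖ξ‖) (hξu : ‖ξ‖ ≤ ((m : ℝ) + 1) * k)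
    (e₁ e₂ : EuclideanSpace ℝ (Fin n)) (he₁ : e₁ = ‖ξ‖⁻¹ • ξ)
    (he₂ : ‖e₂‖ = 1) (horth : ⟪e₁, e₂⟫ = 0)
    (S : ℝ)
    (hS : S = Real.sqrt (-(((m : ℝ) ^ 2 - 1) ^ 2 * k ^ 4) +
      2 * ((m : ℝ) ^ 2 + 1) * k ^ 2 * ‖ξ‖ ^ 2 - ‖ξ‖ ^ 4))
    (μ₁ μ₂ : EuclideanSpace ℝ (Fin n))
    (hμ₁ : μ₁ = (((((m : ℝ) ^ 2 - 1) * k ^ 2 + ‖ξ‖ ^ 2)) / (2 * m * ‖ξ‖)) • e₁ -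
      (S / (2 * m * ‖ξ‖)) • e₂)
    (hμ₂ : μ₂ = (((-((m : ℝ) ^ 2 - 1) * k ^ 2 + ‖ξ‖ ^ 2)) / (2 * ‖ξ‖)) • e₁ +
      (S / (2 * ‖ξ‖)) • e₂) :
    0 ≤ -(((m : ℝ) ^ 2 - 1) ^ 2 * k ^ 4) +
        2 * ((m : ℝ) ^ 2 + 1) * k ^ 2 * ‖ξ‖ ^ 2 - ‖ξ‖ ^ 4 ∧
      ‖μ₁‖ = k ∧ ‖μ₂‖ = k ∧ (m : ℝ) • μ₁ + μ₂ = ξ := by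
  have ht : ‖ξ‖ ≠ 0 := ne_of_gt hξ0
  have hm1 : (1:ℝ) ≤ (m:ℝ) := by exact_mod_cast Nat.one_le_of_lt hm
  have hm0 : (m:ℝ) ≠ 0 := by positivity
  have hmk : (0:ℝ) ≤ ((m:ℝ) - 1) * k := by nlinarith
  have hA : ‖ξ‖ ^ 2 ≤ (((m:ℝ) + 1) * k) ^ 2 := by nlinarith
  have hB : (((m:ℝ) - 1) * k) ^ 2 ≤ ‖ξ‖ ^ 2 := by nlinarith
  have hD : 0 ≤ -(((m : ℝ) ^ 2 - 1) ^ 2 * k ^ 4) +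
      2 * ((m : ℝ) ^ 2 + 1) * k ^ 2 * ‖ξ‖ ^ 2 - ‖ξ‖ ^ 4 := by
    nlinarith [mul_nonneg (sub_nonneg.2 hA) (sub_nonneg.2 hB)]
  have hS2 : S ^ 2 = -(((m : ℝ) ^ 2 - 1) ^ 2 * k ^ 4) +
      2 * ((m : ℝ) ^ 2 + 1) * k ^ 2 * ‖ξ‖ ^ 2 - ‖ξ‖ ^ 4 := by
    rw [hS]; exact Real.sq_sqrt hD
  have he₁n : ‖e₁‖ = 1 := by
    rw [he₁, norm_smul, Real.norm_eq_abs, abs_of_pos (inv_pos.2 hξ0),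
      inv_mul_cancel₀ ht]
  have hden₁ : ((2:ℝ) * m * ‖ξ‖) ^ 2 ≠ 0 := by positivity
  have hden₂ : ((2:ℝ) * ‖ξ‖) ^ 2 ≠ 0 := by positivity
  have h₁sq : ‖μ₁‖ ^ 2 = k ^ 2 := by
    rw [hμ₁, sub_eq_add_neg, ← neg_smul,
      combo_norm_sq e₁ e₂ he₁n he₂ horth, neg_sq, div_pow, div_pow,
      ← add_div,
      show ((((m : ℝ) ^ 2 - 1) * k ^ 2 + ‖ξ‖ ^ 2)) ^ 2 + S ^ 2
        = k ^ 2 * (2 * m * ‖ξ‖) ^ 2 by linear_combination hS2,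
      mul_div_assoc, div_self hden₁, mul_one]
  have h₂sq : ‖μ₂‖ ^ 2 = k ^ 2 := by
    rw [hμ₂, combo_norm_sq e₁ e₂ he₁n he₂ horth, div_pow, div_pow,
      ← add_div,
      show (((-((m : ℝ) ^ 2 - 1) * k ^ 2 + ‖ξ‖ ^ 2))) ^ 2 + S ^ 2
        = k ^ 2 * (2 * ‖ξ‖) ^ 2 by linear_combination hS2,
      mul_div_assoc, div_self hden₂, mul_one]
  have hnorm : ∀ v : EuclideanSpace ℝ (Fin n), ‖v‖ ^ 2 = k ^ 2 → ‖v‖ = k := by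
    intro v hv
    have h0 : (‖v‖ - k) * (‖v‖ + k) = 0 := by nlinarith
    rcases mul_eq_zero.1 h0 with h | h
    · linarith
    · nlinarith [norm_nonneg v]
  refine ⟨hD, hnorm _ h₁sq, hnorm _ h₂sq, ?_⟩
  have hξe : ξ = ‖ξ‖ • e₁ := by
    rw [he₁, smul_smul, mul_inv_cancel₀ ht, one_smul]
  conv_rhs => rw [hξe]
  rw [hμ₁, hμ₂, smul_sub, smul_smul, smul_smul]
  have c1 : (m:ℝ) * (((((m : ℝ) ^ 2 - 1) * k ^ 2 + ‖ξ‖ ^ 2)) / (2 * m * ‖ξ‖))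
      + ((-((m : ℝ) ^ 2 - 1) * k ^ 2 + ‖ξ‖ ^ 2)) / (2 * ‖ξ‖) = ‖ξ‖ := by
    field_simp
    ring
  have c2 : (m:ℝ) * (S / (2 * m * ‖ξ‖)) = S / (2 * ‖ξ‖) := by
    field_simp
  rw [c2]
  have hre : ∀ (X Y Z : ℝ),
      X • e₁ - Y • e₂ + (Z • e₁ + Y • e₂) = (X + Z) • e₁ := by
    intro X Y Z; module
  rw [hre, c1]
end

section
/- Let n ≥ 2, let m ≥ 1 be an integer, let k > 0, and let ξ ∈ ℝⁿ with ξ ≠ 0. Then there exist complex vectors μ₁, μ₂ ∈ ℂⁿ such that μ₁·μ₁ = k², μ₂·μ₂ = k², and m·μ₁ + μ₂ = ξ (where ξ ∈ ℝⁿ is viewed as a vector in ℂⁿ with real entries). -/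
lemma exists_complex_sqrt (r : ℝ) : ∃ z : ℂ, z ^ 2 = (r : ℂ) := by
  rcases le_or_gt 0 r with h | h
  · exact ⟨(Real.sqrt r : ℂ), by norm_cast; rw [Real.sq_sqrt h]⟩
  · refine ⟨Complex.I * (Real.sqrt (-r) : ℂ), ?_⟩
    rw [mul_pow, Complex.I_sq]
    norm_cast
    rw [Real.sq_sqrt (by linarith)]
    push_cast; ring

lemma sum_sq_expand {n : ℕ} (α β : ℂ) (x y : Fin n → ℂ) :
    ∑ j, (α * x j + β * y j) ^ 2 =
      α ^ 2 * (∑ j, x j ^ 2) + 2 * α * β * (∑ j, x j * y j) + β ^ 2 * (∑ j, y j ^ 2) := by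
  rw [Finset.mul_sum, Finset.mul_sum, Finset.mul_sum, ← Finset.sum_add_distrib,
    ← Finset.sum_add_distrib]
  exact Finset.sum_congr rfl fun j _ => by ring

/-- the key construction in Theorem 2.3: for every nonzero frequency ξ ∈ ℝⁿ
there are complex vectors μ₁, μ₂ ∈ ℂⁿ with μ₁·μ₁ = μ₂·μ₂ = k² (bilinear dot product) and
m·μ₁ + μ₂ = ξ. -/
theorem complex_waveVectors_exist (n m : ℕ) (hn : 2 ≤ n) (hm : 1 ≤ m)
    (k : ℝ) (hk : 0 < k) (ξ : EuclideanSpace ℝ (Fin n)) (hξ : ξ ≠ 0) :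
    ∃ μ₁ μ₂ : Fin n → ℂ,
      (∑ j, μ₁ j ^ 2 = (k : ℂ) ^ 2) ∧ (∑ j, μ₂ j ^ 2 = (k : ℂ) ^ 2) ∧
      (∀ j, (m : ℂ) * μ₁ j + μ₂ j = (ξ j : ℂ)) := by
  -- get a unit vector η orthogonal to ξ
  have hbot : ((ℝ ∙ ξ)ᗮ : Submodule ℝ (EuclideanSpace ℝ (Fin n))) ≠ ⊥ := by
    intro h
    rw [Submodule.orthogonal_eq_bot_iff] at h
    have h1 : Module.finrank ℝ (ℝ ∙ ξ) = 1 := finrank_span_singleton hξ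
    have h2 : Module.finrank ℝ (EuclideanSpace ℝ (Fin n)) = n := finrank_euclideanSpace_fin
    rw [h] at h1
    rw [finrank_top] at h1
    omega
  obtain ⟨v, hv, hv0⟩ := Submodule.exists_mem_ne_zero_of_ne_bot hbot
  set η : EuclideanSpace ℝ (Fin n) := ‖v‖⁻¹ • v with hη
  have hηnorm : ‖η‖ = 1 := norm_smul_inv_norm hv0
  have hξη : (inner ℝ ξ η : ℝ) = 0 := by
    have := (Submodule.mem_orthogonal _ v).mp hv ξ (Submodule.mem_span_singleton_self ξ)
    rw [hη, inner_smul_right, this, mul_zero]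
  -- basic real quantities
  set t : ℝ := ‖ξ‖ with ht
  have ht0 : 0 < t := norm_pos_iff.mpr hξ
  have hm0 : (0:ℝ) < (m:ℝ) := by exact_mod_cast hm
  set a : ℝ := (t ^ 2 + ((m:ℝ) ^ 2 - 1) * k ^ 2) / (2 * m * t) with ha
  obtain ⟨β, hβ⟩ := exists_complex_sqrt (k ^ 2 - a ^ 2)
  -- component sums
  have hsum_x : (∑ j, ((ξ j : ℂ)) ^ 2) = ((t ^ 2 : ℝ) : ℂ) := by
    have : (∑ j, (ξ j) ^ 2) = t ^ 2 := by
      rw [ht, ← real_inner_self_eq_norm_sq]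
      simp only [PiLp.inner_apply, RCLike.inner_apply, conj_trivial, sq]
    push_cast [← this]
    norm_num
  have hsum_xy : (∑ j, ((ξ j : ℂ)) * ((η j : ℂ))) = 0 := by
    have : (∑ j, (ξ j) * (η j)) = 0 := by
      rw [← hξη]; simp only [PiLp.inner_apply, RCLike.inner_apply, conj_trivial, mul_comm]
    exact_mod_cast congrArg (fun r : ℝ => (r : ℂ)) this
  have hsum_y : (∑ j, ((η j : ℂ)) ^ 2) = 1 := by
    have : (∑ j, (η j) ^ 2) = 1 := by
      have h1 : (inner ℝ η η : ℝ) = 1 := by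
        rw [real_inner_self_eq_norm_sq, hηnorm]; norm_num
      rw [← h1]; simp only [PiLp.inner_apply, RCLike.inner_apply, conj_trivial, sq]
    exact_mod_cast congrArg (fun r : ℝ => (r : ℂ)) this
  -- key real identity
  have key : t ^ 2 - 2 * (m:ℝ) * a * t + (m:ℝ) ^ 2 * k ^ 2 = k ^ 2 := by
    rw [ha]; field_simp; ring
  refine ⟨fun j => ((a / t : ℝ) : ℂ) * (ξ j : ℂ) + β * (η j : ℂ),
    fun j => (((t - m * a) / t : ℝ) : ℂ) * (ξ j : ℂ) + (-(m:ℂ) * β) * (η j : ℂ), ?_, ?_, ?_⟩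
  · rw [sum_sq_expand, hsum_x, hsum_xy, hsum_y, hβ]
    push_cast
    rw [mul_zero, mul_one, add_zero]
    have : ((a:ℂ) / t) ^ 2 * (t:ℂ) ^ 2 = (a:ℂ) ^ 2 := by
      have : (t:ℂ) ≠ 0 := by exact_mod_cast ht0.ne'
      field_simp
    rw [this]; ring
  · rw [sum_sq_expand, hsum_x, hsum_xy, hsum_y, mul_pow, hβ]
    push_cast
    rw [mul_zero, mul_one, add_zero]
    have htc : (t:ℂ) ≠ 0 := by exact_mod_cast ht0.ne'
    have keyC : (t:ℂ) ^ 2 - 2 * (m:ℂ) * (a:ℂ) * (t:ℂ) + (m:ℂ) ^ 2 * (k:ℂ) ^ 2 = (k:ℂ) ^ 2 := by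
      exact_mod_cast congrArg (fun r : ℝ => (r : ℂ)) key
    field_simp
    linear_combination keyC
  · intro j
    push_cast
    have htc : (t:ℂ) ≠ 0 := by exact_mod_cast ht0.ne'
    field_simp
    ring
end

section
/- Let n ≥ 2, let m ≥ 2 be an even integer, let k > 0, D > 0, and let ξ ∈ ℝⁿ with ‖ξ‖ > (m+1)k. Set e₁ = ξ/‖ξ‖, let e₂ ∈ ℝⁿ be a unit vector with ⟨e₁, e₂⟩ = 0, and set Ξ = √(‖ξ‖² − 2k‖ξ‖ − (m²−1)k²). Define the complex vectors ζ₁ = (1/m)(−k + ‖ξ‖)·e₁ + (i/m)·Ξ·e₂ and ζ₂ = (1/m)(−k + ‖ξ‖)·e₁ − (i/m)·Ξ·e₂ in ℂⁿ, and ζ₃ = k·e₁. Then ‖ξ‖² − 2k‖ξ‖ − (m²−1)k² > 0; ζ₁·ζ₁ = ζ₂·ζ₂ = ζ₃·ζ₃ = k²; (m/2)·ζ₁ + (m/2)·ζ₂ + ζ₃ = ξ; and for every x ∈ ℝⁿ with ‖x‖ ≤ D/2 and each j ∈ {1, 2}, |exp(i Σ_{l=1}^{n} (ζ_j)_l x_l)|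 ≤ exp(DΞ/(2m)), while |exp(i Σ_{l=1}^{n} (ζ₃)_l x_l)| = 1. -/
open scoped RealInnerProductSpace

/-- the high-frequency regime ‖ξ‖ > (m+1)k of the construction in Theorem 2.2
(even m): the discriminant ‖ξ‖² − 2k‖ξ‖ − (m²−1)k² is positive, the complex wave vectors
ζ₁, ζ₂ (with imaginary transverse component) and the real vector ζ₃ satisfy ζ_j·ζ_j = k²
(bilinear dot product), (m/2)·ζ₁ + (m/2)·ζ₂ + ζ₃ = ξ, and the corresponding plane waves
obey |e^{iζ_j·x}| ≤ e^{DΞ/(2m)} for j = 1,2 and |e^{iζ₃·x}| = 1 on the ball ‖x‖ ≤ D/2. -/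
theorem waveVectors_even_highFrequency (n m : ℕ) (hn : 2 ≤ n) (hm : 2 ≤ m) (hme : Even m)
    (k D : ℝ) (hk : 0 < k) (hD : 0 < D) (ξ : EuclideanSpace ℝ (Fin n))
    (hξ : ((m : ℝ) + 1) * k < ‖ξ‖)
    (e₁ e₂ : EuclideanSpace ℝ (Fin n)) (he₁ : e₁ = ‖ξ‖⁻¹ • ξ)
    (he₂ : ‖e₂‖ = 1) (horth : ⟪e₁, e₂⟫ = 0)
    (Ξ : ℝ) (hΞ : Ξ = Real.sqrt (‖ξ‖ ^ 2 - 2 * k * ‖ξ‖ - ((m : ℝ) ^ 2 - 1) * k ^ 2))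
    (ζ₁ ζ₂ ζ₃ : Fin n → ℂ)
    (hζ₁ : ζ₁ = fun l => ((1 / (m : ℂ)) * (-(k : ℂ) + (‖ξ‖ : ℂ))) * (e₁ l : ℂ) +
      (Complex.I / (m : ℂ)) * (Ξ : ℂ) * (e₂ l : ℂ))
    (hζ₂ : ζ₂ = fun l => ((1 / (m : ℂ)) * (-(k : ℂ) + (‖ξ‖ : ℂ))) * (e₁ l : ℂ) -
      (Complex.I / (m : ℂ)) * (Ξ : ℂ) * (e₂ l : ℂ))
    (hζ₃ : ζ₃ = fun l => ((k * e₁ l : ℝ) : ℂ)) :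
    0 < ‖ξ‖ ^ 2 - 2 * k * ‖ξ‖ - ((m : ℝ) ^ 2 - 1) * k ^ 2 ∧
      (∑ l, ζ₁ l ^ 2 = (k : ℂ) ^ 2) ∧ (∑ l, ζ₂ l ^ 2 = (k : ℂ) ^ 2) ∧
      (∑ l, ζ₃ l ^ 2 = (k : ℂ) ^ 2) ∧
      (∀ l, ((m : ℂ) / 2) * ζ₁ l + ((m : ℂ) / 2) * ζ₂ l + ζ₃ l = (ξ l : ℂ)) ∧
      (∀ x : EuclideanSpace ℝ (Fin n), ‖x‖ ≤ D / 2 →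
        ‖Complex.exp (Complex.I * ∑ l, ζ₁ l * (x l : ℂ))‖ ≤
            Real.exp (D * Ξ / (2 * m)) ∧
          ‖Complex.exp (Complex.I * ∑ l, ζ₂ l * (x l : ℂ))‖ ≤
            Real.exp (D * Ξ / (2 * m)) ∧
          ‖Complex.exp (Complex.I * ∑ l, ζ₃ l * (x l : ℂ))‖ = 1) := by
  have hmR : (2:ℝ) ≤ (m:ℝ) := by exact_mod_cast hm
  have htpos : 0 < ‖ξ‖ := lt_trans (by nlinarith) hξ
  have hdisc : 0 < ‖ξ‖ ^ 2 - 2 * k * ‖ξ‖ - ((m : ℝ) ^ 2 - 1) * k ^ 2 := by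
    nlinarith [mul_pos (sub_pos.2 hξ) (show (0:ℝ) < ‖ξ‖ + ((m:ℝ) - 1) * k by nlinarith)]
  have hΞ0 : 0 ≤ Ξ := hΞ ▸ Real.sqrt_nonneg _
  have hΞ2 : Ξ ^ 2 = ‖ξ‖ ^ 2 - 2 * k * ‖ξ‖ - ((m : ℝ) ^ 2 - 1) * k ^ 2 := by
    rw [hΞ, Real.sq_sqrt hdisc.le]
  have hm0 : (m:ℂ) ≠ 0 := by
    simp only [Ne, Nat.cast_eq_zero]; omega
  have he₁n : ‖e₁‖ = 1 := by
    rw [he₁, norm_smul, norm_inv, norm_norm, inv_mul_cancel₀ htpos.ne']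
  -- real sums
  have hinner : ∀ x y : EuclideanSpace ℝ (Fin n), ⟪x, y⟫ = ∑ l, x l * y l := fun x y => by
    simp [PiLp.inner_apply, RCLike.inner_apply, conj_trivial]
    exact Finset.sum_congr rfl fun _ _ => mul_comm _ _
  have hs11 : ∑ l, e₁ l * e₁ l = 1 := by
    rw [← hinner, real_inner_self_eq_norm_sq, he₁n]; norm_num
  have hs22 : ∑ l, e₂ l * e₂ l = 1 := by
    rw [← hinner, real_inner_self_eq_norm_sq, he₂]; norm_num
  have hs12 : ∑ l, e₁ l * e₂ l = 0 := by rw [← hinner, horth]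
  have hc11 : ∑ l, ((e₁ l : ℂ)) * (e₁ l : ℂ) = 1 := by
    have := congrArg (fun r : ℝ => (r : ℂ)) hs11
    push_cast at this; simpa using this
  have hc22 : ∑ l, ((e₂ l : ℂ)) * (e₂ l : ℂ) = 1 := by
    have := congrArg (fun r : ℝ => (r : ℂ)) hs22
    push_cast at this; simpa using this
  have hc12 : ∑ l, ((e₁ l : ℂ)) * (e₂ l : ℂ) = 0 := by
    have := congrArg (fun r : ℝ => (r : ℂ)) hs12
    push_cast at this; simpa using this
  have hkey : (-k + ‖ξ‖) ^ 2 - Ξ ^ 2 = (m:ℝ) ^ 2 * k ^ 2 := by rw [hΞ2]; ring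
  have hkeyC : ((-(k:ℂ) + (‖ξ‖:ℂ)) ^ 2 - (Ξ:ℂ) ^ 2) = (m:ℂ) ^ 2 * (k:ℂ) ^ 2 := by
    exact_mod_cast congrArg (fun r : ℝ => (r : ℂ)) hkey
  set a : ℂ := (1 / (m : ℂ)) * (-(k : ℂ) + (‖ξ‖ : ℂ)) with ha
  set b : ℂ := Complex.I / (m : ℂ) * (Ξ : ℂ) with hb
  have hab : a ^ 2 + b ^ 2 = (k:ℂ) ^ 2 := by
    rw [ha, hb]
    field_simp
    linear_combination hkeyC + ((Ξ:ℂ)^2) * Complex.I_sq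
  have hsq1 : ∑ l, ζ₁ l ^ 2 = (k : ℂ) ^ 2 := by
    have : ∑ l, ζ₁ l ^ 2 = a ^ 2 * ∑ l, (e₁ l : ℂ) * (e₁ l : ℂ)
        + (2 * a * b) * ∑ l, (e₁ l : ℂ) * (e₂ l : ℂ)
        + b ^ 2 * ∑ l, (e₂ l : ℂ) * (e₂ l : ℂ) := by
      rw [hζ₁, Finset.mul_sum, Finset.mul_sum, Finset.mul_sum,
        ← Finset.sum_add_distrib, ← Finset.sum_add_distrib]
      exact Finset.sum_congr rfl fun l _ => by ring
    rw [this, hc11, hc12, hc22]; rw [← hab]; ring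
  have hsq2 : ∑ l, ζ₂ l ^ 2 = (k : ℂ) ^ 2 := by
    have : ∑ l, ζ₂ l ^ 2 = a ^ 2 * ∑ l, (e₁ l : ℂ) * (e₁ l : ℂ)
        - (2 * a * b) * ∑ l, (e₁ l : ℂ) * (e₂ l : ℂ)
        + b ^ 2 * ∑ l, (e₂ l : ℂ) * (e₂ l : ℂ) := by
      rw [hζ₂, Finset.mul_sum, Finset.mul_sum, Finset.mul_sum,
        ← Finset.sum_sub_distrib, ← Finset.sum_add_distrib]
      exact Finset.sum_congr rfl fun l _ => by ring
    rw [this, hc11, hc12, hc22]; rw [← hab]; ring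
  have hsq3 : ∑ l, ζ₃ l ^ 2 = (k : ℂ) ^ 2 := by
    have : ∑ l, ζ₃ l ^ 2 = (k:ℂ) ^ 2 * ∑ l, (e₁ l : ℂ) * (e₁ l : ℂ) := by
      rw [hζ₃, Finset.mul_sum]
      exact Finset.sum_congr rfl fun l _ => by push_cast; ring
    rw [this, hc11, mul_one]
  refine ⟨hdisc, hsq1, hsq2, hsq3, ?_, ?_⟩
  · intro l
    have he1l : e₁ l = ‖ξ‖⁻¹ * ξ l := by rw [he₁]; rfl
    rw [hζ₁, hζ₂, hζ₃]
    simp only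
    rw [he1l]
    have htC : (‖ξ‖ : ℂ) ≠ 0 := by exact_mod_cast htpos.ne'
    push_cast
    have h2 : (m:ℂ) * (m:ℂ)⁻¹ = 1 := mul_inv_cancel₀ hm0
    have h1 : (‖ξ‖:ℂ) * (‖ξ‖:ℂ)⁻¹ = 1 := mul_inv_cancel₀ htC
    linear_combination ((-(k:ℂ) + (‖ξ‖:ℂ)) * ((‖ξ‖:ℂ))⁻¹ * (ξ l : ℂ)) * h2
      + ((ξ l : ℂ)) * h1
  · intro x hx
    have ha' : a = (((-k + ‖ξ‖)/m : ℝ) : ℂ) := by rw [ha]; push_cast; ring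
    have hb' : b = Complex.I * ((Ξ / m : ℝ) : ℂ) := by rw [hb]; push_cast; ring
    have hcs1 : |∑ l, e₂ l * x l| ≤ D / 2 := by
      rw [← hinner]
      calc |⟪e₂, x⟫| ≤ ‖e₂‖ * ‖x‖ := abs_real_inner_le_norm _ _
        _ ≤ D / 2 := by rw [he₂, one_mul]; exact hx
    have hB : |Ξ / m * ∑ l, e₂ l * x l| ≤ D * Ξ / (2 * m) := by
      rw [abs_mul, abs_of_nonneg (by positivity : (0:ℝ) ≤ Ξ / m)]
      calc Ξ / m * |∑ l, e₂ l * x l| ≤ Ξ / m * (D / 2) := by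
            apply mul_le_mul_of_nonneg_left hcs1 (by positivity)
        _ = D * Ξ / (2 * m) := by ring
    set A : ℝ := (-k + ‖ξ‖)/m * ∑ l, e₁ l * x l with hA
    set B : ℝ := Ξ / m * ∑ l, e₂ l * x l with hBdef
    have habs : ∀ (s : ℤ), ‖Complex.exp (Complex.I *
        ((A : ℂ) + (s:ℂ) * Complex.I * (B : ℂ)))‖ = Real.exp (-(s:ℝ) * B) := by
      intro s
      rw [Complex.norm_exp]
      congr 1
      simp [Complex.mul_re, Complex.add_re, Complex.add_im, Complex.mul_im]
    have hsum1 : ∑ l, ζ₁ l * (x l : ℂ) =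
        a * ((∑ l, e₁ l * x l : ℝ):ℂ) + b * ((∑ l, e₂ l * x l : ℝ):ℂ) := by
      rw [hζ₁]
      push_cast
      rw [Finset.mul_sum, Finset.mul_sum, ← Finset.sum_add_distrib]
      exact Finset.sum_congr rfl fun l _ => by ring
    have hsum2 : ∑ l, ζ₂ l * (x l : ℂ) =
        a * ((∑ l, e₁ l * x l : ℝ):ℂ) - b * ((∑ l, e₂ l * x l : ℝ):ℂ) := by
      rw [hζ₂]
      push_cast
      rw [Finset.mul_sum, Finset.mul_sum, ← Finset.sum_sub_distrib]
      exact Finset.sum_congr rfl fun l _ => by ring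
    have hS1 : ∑ l, ζ₁ l * (x l : ℂ) = (A : ℂ) + ((1:ℤ):ℂ) * Complex.I * (B : ℂ) := by
      rw [hsum1, ha', hb', hA, hBdef]; push_cast; ring
    have hS2 : ∑ l, ζ₂ l * (x l : ℂ) = (A : ℂ) + ((-1:ℤ):ℂ) * Complex.I * (B : ℂ) := by
      rw [hsum2, ha', hb', hA, hBdef]; push_cast; ring
    have hBle := abs_le.1 hB
    refine ⟨?_, ?_, ?_⟩
    · rw [hS1, habs 1]
      apply Real.exp_le_exp.2
      push_cast
      linarith [hBle.1]
    · rw [hS2, habs (-1)]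
      apply Real.exp_le_exp.2
      push_cast
      linarith [hBle.2]
    · have hS3 : ∑ l, ζ₃ l * (x l : ℂ) = ((∑ l, k * e₁ l * x l : ℝ) : ℂ) := by
        rw [hζ₃]
        push_cast
        exact Finset.sum_congr rfl fun l _ => by ring
      rw [hS3, Complex.norm_exp]
      simp [Complex.mul_re]
end
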